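/- Let k ≥ 2 and n ≥ 1. If G is a graph such that G → (K_{1,k}, K_n), then the number of edges of G satisfies e(G) ≥ k²·C(n−1, 2). -/

import Mathlib

open SimpleGraph

/-- `H` contains a copy of `G`, i.e. there is an injective graph homomorphism `G →g H`. -/
def ContainsCopy {α β : Type*} (G : SimpleGraph α) (H : SimpleGraph β) : Prop :=
  ∃ f : G →g H, Function.Injective f

/-- `F ⟶ (G, H)` : for every red-blue colouring of the edges of `F` (encoded by the red
subgraph `R ≤ F`, the blue edges being `F \ R`) there is a red copy of `G` or a blue copy
of `H`. -/
def Arrows {γ α β : Type*} (F : SimpleGraph γ) (G : SimpleGraph α) (H : SimpleGraph β) : Prop :=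
  ∀ R : SimpleGraph γ, R ≤ F → ContainsCopy G R ∨ ContainsCopy H (F \ R)

/-- The Ramsey number `r(G, H)` : the least `n` such that `K_n ⟶ (G, H)`. -/
noncomputable def ramseyNumber {α β : Type*} (G : SimpleGraph α) (H : SimpleGraph β) : ℕ :=
  sInf {n : ℕ | Arrows (⊤ : SimpleGraph (Fin n)) G H}

/-- The size Ramsey number `r̂(G, H)` : the least number of edges of a graph `F` with
`F ⟶ (G, H)`. -/
noncomputable def sizeRamsey {α β : Type*} (G : SimpleGraph α) (H : SimpleGraph β) : ℕ :=
  sInf {m : ℕ | ∃ (N : ℕ) (F : SimpleGraph (Fin N)), Arrows F G H ∧ F.edgeSet.ncard = m}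

/-- The restricted size Ramsey number `r̂*(G, H)` : the least number of edges of a graph `F`
on exactly `r(G, H)` vertices with `F ⟶ (G, H)`. -/
noncomputable def restrictedSizeRamsey {α β : Type*} (G : SimpleGraph α) (H : SimpleGraph β) : ℕ :=
  sInf {m : ℕ | ∃ F : SimpleGraph (Fin (ramseyNumber G H)),
    Arrows F G H ∧ F.edgeSet.ncard = m}

/-- The star `K_{1,k}` with `k` edges. -/
def starGraph (k : ℕ) : SimpleGraph (Fin 1 ⊕ Fin k) := completeBipartiteGraph (Fin 1) (Fin k)

section Aux

open Finset

variable {V : Type*} [Fintype V] [DecidableEq V]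

private lemma sum_desc (m : ℕ) : (∑ t ∈ Finset.range m, (m - t)) = (m+1).choose 2 := by
  induction m with
  | zero => simp
  | succ m ih =>
    rw [Finset.sum_range_succ]
    have h2 : (∑ t ∈ Finset.range m, (m + 1 - t)) = (∑ t ∈ Finset.range m, ((m - t) + 1)) := by
      apply Finset.sum_congr rfl
      intro t ht
      have := Finset.mem_range.mp ht
      omega
    have h3 : (m+1+1).choose 2 = (m+1) + (m+1).choose 2 := by
      rw [Nat.choose_succ_succ, Nat.choose_one_right]
    rw [h2, Finset.sum_add_distrib, Finset.sum_const, ih]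
    simp only [Finset.card_range, smul_eq_mul, mul_one]
    omega

/-- Counting pairs with one coordinate equal to `w` (left version). -/
private lemma card_left (G : SimpleGraph V) [DecidableRel G.Adj] (S : Finset V)
    {N : ℕ} (d : V → Fin N) (w : V) (hwS : w ∉ S) :
    (Finset.univ.filter (fun ab : V × V =>
      ((ab.1 ∉ S ∧ ab.2 ∉ S ∧ G.Adj ab.1 ab.2 ∧ d ab.1 = d ab.2) ∧ ab.1 = w))).card
    = (((G.neighborFinset w).filter (fun u => u ∉ S)).filter (fun u => d u = d w)).card := by
  apply Finset.card_bij (fun ab _ => ab.2)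
  · intro ab hab
    simp only [Finset.mem_filter, Finset.mem_univ, true_and] at hab
    obtain ⟨⟨h1, h2, h3, h4⟩, h5⟩ := hab
    subst h5
    simp only [Finset.mem_filter, SimpleGraph.mem_neighborFinset]
    exact ⟨⟨h3, h2⟩, h4.symm⟩
  · intro a ha b hb hab
    simp only [Finset.mem_filter, Finset.mem_univ, true_and] at ha hb
    exact Prod.ext (ha.2.trans hb.2.symm) hab
  · intro b hb
    simp only [Finset.mem_filter, SimpleGraph.mem_neighborFinset] at hb
    refine ⟨(w, b), ?_, rfl⟩
    simp only [Finset.mem_filter, Finset.mem_univ, true_and]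
    exact ⟨⟨hwS, hb.1.2, hb.1.1, hb.2.symm⟩, by trivial⟩

/-- Counting pairs with one coordinate equal to `w` (right version). -/
private lemma card_right (G : SimpleGraph V) [DecidableRel G.Adj] (S : Finset V)
    {N : ℕ} (d : V → Fin N) (w : V) (hwS : w ∉ S) :
    (Finset.univ.filter (fun ab : V × V =>
      (((ab.1 ∉ S ∧ ab.2 ∉ S ∧ G.Adj ab.1 ab.2 ∧ d ab.1 = d ab.2) ∧ ¬ ab.1 = w) ∧ ab.2 = w))).card
    = (((G.neighborFinset w).filter (fun u => u ∉ S)).filter (fun u => d u = d w)).card := by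
  apply Finset.card_bij (fun ab _ => ab.1)
  · intro ab hab
    simp only [Finset.mem_filter, Finset.mem_univ, true_and] at hab
    obtain ⟨⟨⟨h1, h2, h3, h4⟩, h5⟩, h6⟩ := hab
    subst h6
    simp only [Finset.mem_filter, SimpleGraph.mem_neighborFinset]
    exact ⟨⟨h3.symm, h1⟩, h4⟩
  · intro a ha b hb hab
    simp only [Finset.mem_filter, Finset.mem_univ, true_and] at ha hb
    exact Prod.ext hab (ha.2.trans hb.2.symm)
  · intro b hb
    simp only [Finset.mem_filter, SimpleGraph.mem_neighborFinset] at hb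
    refine ⟨(b, w), ?_, rfl⟩
    have hbw : b ≠ w := (hb.1.1).ne'
    simp only [Finset.mem_filter, Finset.mem_univ, true_and]
    exact ⟨⟨⟨hb.1.2, hwS, hb.1.1.symm, hb.2⟩, hbw⟩, by trivial⟩

/-- Decomposition of the monochromatic-pair count at a vertex `w ∉ S`. -/
private lemma pairs_card (G : SimpleGraph V) [DecidableRel G.Adj] (S : Finset V)
    {N : ℕ} (d : V → Fin N) (w : V) (hwS : w ∉ S) :
    (Finset.univ.filter (fun ab : V × V =>
      ab.1 ∉ S ∧ ab.2 ∉ S ∧ G.Adj ab.1 ab.2 ∧ d ab.1 = d ab.2)).card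
    = 2 * (((G.neighborFinset w).filter (fun u => u ∉ S)).filter (fun u => d u = d w)).card
      + (Finset.univ.filter (fun ab : V × V =>
        (((ab.1 ∉ S ∧ ab.2 ∉ S ∧ G.Adj ab.1 ab.2 ∧ d ab.1 = d ab.2) ∧ ¬ ab.1 = w) ∧ ¬ ab.2 = w))).card := by
  have e1 := Finset.card_filter_add_card_filter_not
    (s := Finset.univ.filter (fun ab : V × V =>
      ab.1 ∉ S ∧ ab.2 ∉ S ∧ G.Adj ab.1 ab.2 ∧ d ab.1 = d ab.2))
    (p := fun ab : V × V => ab.1 = w)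
  have e2 := Finset.card_filter_add_card_filter_not
    (s := Finset.univ.filter (fun ab : V × V =>
      (ab.1 ∉ S ∧ ab.2 ∉ S ∧ G.Adj ab.1 ab.2 ∧ d ab.1 = d ab.2) ∧ ¬ ab.1 = w))
    (p := fun ab : V × V => ab.2 = w)
  rw [Finset.filter_filter, Finset.filter_filter] at e1
  rw [Finset.filter_filter, Finset.filter_filter] at e2
  rw [card_left G S d w hwS] at e1
  rw [card_right G S d w hwS] at e2
  omega

/-- The key lemma: if there is no "good" defective colouring, then for every suitably
pre-coloured `S` there is a vertex outside `S` with many neighbours outside `S`. -/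
private lemma keyLemma (G : SimpleGraph V) [DecidableRel G.Adj] (k N p : ℕ)
    (hk : 1 ≤ k) (hp : 1 ≤ p) (hpN : p ≤ N)
    (Hc : ∀ c : V → Fin N, ∃ v, k ≤ ((G.neighborFinset v).filter (fun u => c u = c v)).card)
    (S : Finset V) (fx : V → ℕ)
    (hfix : ∀ v ∈ S, p ≤ fx v ∧ fx v < N)
    (hclass : ∀ col, (S.filter (fun v => fx v = col)).card ≤ k) :
    ∃ v, v ∉ S ∧ k * p ≤ ((G.neighborFinset v).filter (fun u => u ∉ S)).card := by
  by_contra hcon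
  push_neg at hcon
  have hN : 0 < N := by omega
  set CS : Finset (V → Fin N) := Finset.univ.filter
    (fun c => (∀ v ∈ S, (c v : ℕ) = fx v) ∧ ∀ v, v ∉ S → (c v : ℕ) < p) with hCS
  have hc₀ : (fun v => if h : v ∈ S then (⟨fx v, (hfix v h).2⟩ : Fin N) else ⟨0, hN⟩) ∈ CS := by
    simp only [hCS, Finset.mem_filter, Finset.mem_univ, true_and]
    constructor
    · intro v hv; simp [hv]
    · intro v hv; simp only [hv, dif_neg, not_false_iff]; omega
  set Φ : (V → Fin N) → ℕ := fun c => (Finset.univ.filter (fun ab : V × V =>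
      ab.1 ∉ S ∧ ab.2 ∉ S ∧ G.Adj ab.1 ab.2 ∧ c ab.1 = c ab.2)).card with hΦ
  obtain ⟨c, hcCS, hmin⟩ := CS.exists_min_image Φ ⟨_, hc₀⟩
  have hcS : ∀ v ∈ S, (c v : ℕ) = fx v := by
    have := Finset.mem_filter.mp hcCS; exact this.2.1
  have hcT : ∀ v, v ∉ S → (c v : ℕ) < p := by
    have := Finset.mem_filter.mp hcCS; exact this.2.2
  obtain ⟨w, hw⟩ := Hc c
  by_cases hwS : w ∈ S
  · -- w ∈ S : its monochromatic neighbours sit inside its colour class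
    have hsub : (G.neighborFinset w).filter (fun u => c u = c w) ⊆
        (S.filter (fun v => fx v = fx w)).erase w := by
      intro u hu
      simp only [Finset.mem_filter, SimpleGraph.mem_neighborFinset] at hu
      have huS : u ∈ S := by
        by_contra huT
        have h1 := hcT u huT
        have h2 := (hfix w hwS).1
        rw [hu.2] at h1
        rw [hcS w hwS] at h1
        omega
      have : fx u = fx w := by
        rw [← hcS u huS, ← hcS w hwS, hu.2]
      refine Finset.mem_erase.mpr ⟨hu.1.ne', Finset.mem_filter.mpr ⟨huS, this⟩⟩
    have h1 := Finset.card_le_card hsub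
    have h2 : ((S.filter (fun v => fx v = fx w)).erase w).card
        = (S.filter (fun v => fx v = fx w)).card - 1 :=
      Finset.card_erase_of_mem (Finset.mem_filter.mpr ⟨hwS, rfl⟩)
    have h3 := hclass (fx w)
    omega
  · -- w ∉ S : exchange argument
    set D := (G.neighborFinset w).filter (fun u => u ∉ S) with hD
    have hDcard : D.card < k * p := hcon w hwS
    have hmono : (G.neighborFinset w).filter (fun u => c u = c w) ⊆
        D.filter (fun u => c u = c w) := by
      intro u hu
      rw [Finset.mem_filter, SimpleGraph.mem_neighborFinset] at hu
      rw [Finset.mem_filter, hD, Finset.mem_filter, SimpleGraph.mem_neighborFinset]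
      refine ⟨⟨hu.1, ?_⟩, hu.2⟩
      by_contra huS
      have h1 := hcS u huS
      have h2 := (hfix u huS).1
      have h3 := hcT w hwS
      rw [hu.2] at h1
      omega
    have hbig : k ≤ (D.filter (fun u => c u = c w)).card :=
      le_trans hw (Finset.card_le_card hmono)
    -- fibers
    have hfib : ∑ col ∈ Finset.range p, (D.filter (fun u => (c u : ℕ) = col)).card = D.card := by
      rw [← Finset.card_eq_sum_card_fiberwise]
      intro u hu
      simp only [hD, Finset.mem_coe, Finset.mem_filter] at hu
      exact Finset.mem_range.mpr (hcT u hu.2)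
    have hex : ∃ col ∈ Finset.range p, (D.filter (fun u => (c u : ℕ) = col)).card < k := by
      by_contra hall
      push_neg at hall
      have : p * k ≤ ∑ col ∈ Finset.range p, (D.filter (fun u => (c u : ℕ) = col)).card := by
        calc p * k = ∑ _col ∈ Finset.range p, k := by simp [mul_comm]
        _ ≤ _ := Finset.sum_le_sum hall
      rw [hfib] at this
      have hmc : p * k = k * p := Nat.mul_comm p k
      omega
    obtain ⟨col, hcolp, hcolsmall⟩ := hex
    rw [Finset.mem_range] at hcolp
    -- the new colouring
    set c' : V → Fin N := Function.update c w ⟨col, hcolp.trans_le hpN⟩ with hc'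
    have hc'CS : c' ∈ CS := by
      simp only [hCS, Finset.mem_filter, Finset.mem_univ, true_and]
      constructor
      · intro v hv
        have hvw : v ≠ w := fun h => hwS (h ▸ hv)
        rw [hc', Function.update_of_ne hvw]
        exact hcS v hv
      · intro v hv
        by_cases hvw : v = w
        · subst hvw; rw [hc', Function.update_self]; exact hcolp
        · rw [hc', Function.update_of_ne hvw]; exact hcT v hv
    -- fiber identifications
    have hfw : (D.filter (fun u => c u = c w)).card
        = (D.filter (fun u => (c u : ℕ) = (c w : ℕ))).card := by
      congr 1
      apply Finset.filter_congr
      intro u _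
      exact ⟨fun h => by rw [h], fun h => Fin.ext h⟩
    have hfw' : (D.filter (fun u => c' u = c' w)).card
        = (D.filter (fun u => (c u : ℕ) = col)).card := by
      congr 1
      apply Finset.filter_congr
      intro u hu
      have huw : u ≠ w := by
        simp only [hD, Finset.mem_filter, SimpleGraph.mem_neighborFinset] at hu
        exact hu.1.ne'
      rw [hc', Function.update_of_ne huw, Function.update_self]
      exact ⟨fun h => by rw [h], fun h => Fin.ext h⟩
    -- rest is unchanged
    have hrest : (Finset.univ.filter (fun ab : V × V =>
        (((ab.1 ∉ S ∧ ab.2 ∉ S ∧ G.Adj ab.1 ab.2 ∧ c ab.1 = c ab.2) ∧ ¬ ab.1 = w) ∧ ¬ ab.2 = w)))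
        = (Finset.univ.filter (fun ab : V × V =>
        (((ab.1 ∉ S ∧ ab.2 ∉ S ∧ G.Adj ab.1 ab.2 ∧ c' ab.1 = c' ab.2) ∧ ¬ ab.1 = w) ∧ ¬ ab.2 = w))) := by
      apply Finset.filter_congr
      intro ab _
      constructor
      · rintro ⟨⟨⟨h1, h2, h3, h4⟩, h5⟩, h6⟩
        exact ⟨⟨⟨h1, h2, h3, by rw [hc', Function.update_of_ne h5, Function.update_of_ne h6]; exact h4⟩, h5⟩, h6⟩
      · rintro ⟨⟨⟨h1, h2, h3, h4⟩, h5⟩, h6⟩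
        rw [hc', Function.update_of_ne h5, Function.update_of_ne h6] at h4
        exact ⟨⟨⟨h1, h2, h3, h4⟩, h5⟩, h6⟩
    have hΦc := pairs_card G S c w hwS
    have hΦc' := pairs_card G S c' w hwS
    have hlt : Φ c' < Φ c := by
      simp only [hΦ]
      rw [hΦc, hΦc', ← hrest, hfw', hfw]
      have hcw : k ≤ (D.filter (fun u => (c u : ℕ) = (c w : ℕ))).card := by
        rw [← hfw]; exact hbig
      omega
    exact absurd (hmin c' hc'CS) (by omega)

/-- The greedy edge-accumulation. -/
private lemma build (G : SimpleGraph V) [DecidableRel G.Adj] (k N : ℕ) (hk : 1 ≤ k) (hN : 1 ≤ N)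
    (Hc : ∀ c : V → Fin N, ∃ v, k ≤ ((G.neighborFinset v).filter (fun u => c u = c v)).card) :
    k * k * N.choose 2 ≤ G.edgeFinset.card := by
  have main : ∀ j, j ≤ N - 1 → ∃ (S : Finset V) (fx : V → ℕ) (E : Finset (Sym2 V)),
      S.card = j * k ∧ (∀ v ∈ S, N - j ≤ fx v ∧ fx v < N) ∧
      (∀ col, (S.filter (fun v => fx v = col)).card ≤ k) ∧
      E ⊆ G.edgeFinset ∧ (∀ e ∈ E, ∃ x ∈ S, x ∈ e) ∧
      k * k * (∑ t ∈ Finset.range j, (N - 1 - t)) ≤ E.card := by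
    intro j
    induction j with
    | zero =>
      exact fun _ => ⟨∅, fun _ => 0, ∅, by simp, by simp, by simp, by simp, by simp, by simp⟩
    | succ j ih =>
      intro hj1
      obtain ⟨S0, fx0, E0, hcard0, hfx0, hclass0, hE0sub, hE0touch, hE0card⟩ := ih (by omega)
      have hp1 : 1 ≤ N - 1 - j := by omega
      have inner : ∀ t, t ≤ k → ∃ (S : Finset V) (fx : V → ℕ) (E : Finset (Sym2 V)),
          S.card = j * k + t ∧ (∀ v ∈ S, N - 1 - j ≤ fx v ∧ fx v < N) ∧
          (∀ col, (S.filter (fun v => fx v = col)).card ≤ k) ∧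
          (S.filter (fun v => fx v = N - 1 - j)).card ≤ t ∧
          E ⊆ G.edgeFinset ∧ (∀ e ∈ E, ∃ x ∈ S, x ∈ e) ∧
          k * k * (∑ t ∈ Finset.range j, (N - 1 - t)) + t * (k * (N - 1 - j)) ≤ E.card := by
        intro t
        induction t with
        | zero =>
          intro _
          refine ⟨S0, fx0, E0, by omega, ?_, hclass0, ?_, hE0sub, hE0touch, by omega⟩
          · intro v hv; have := hfx0 v hv; omega
          · have : S0.filter (fun v => fx0 v = N - 1 - j) = ∅ := by
              apply Finset.filter_eq_empty_iff.mpr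
              intro v hv
              have := hfx0 v hv
              omega
            rw [this]; simp
        | succ t iht =>
          intro ht1
          obtain ⟨S, fx, E, h1, h2, h3, h4, h5, h6, h7⟩ := iht (by omega)
          obtain ⟨v, hvS, hvdeg⟩ := keyLemma G k N (N - 1 - j) hk hp1 (by omega) Hc S fx h2 h3
          set D := (G.neighborFinset v).filter (fun u => u ∉ S) with hDdef
          refine ⟨insert v S, Function.update fx v (N - 1 - j),
            E ∪ D.image (fun w => s(v, w)), ?_, ?_, ?_, ?_, ?_, ?_, ?_⟩
          · rw [Finset.card_insert_of_notMem hvS, h1]; omega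
          · intro u hu
            rcases Finset.mem_insert.mp hu with rfl | huS
            · rw [Function.update_self]; omega
            · have huv : u ≠ v := fun h => hvS (h ▸ huS)
              rw [Function.update_of_ne huv]; exact h2 u huS
          · intro col
            by_cases hcol : col = N - 1 - j
            · subst hcol
              have hsub : (insert v S).filter (fun u => Function.update fx v (N - 1 - j) u = N - 1 - j)
                  ⊆ insert v (S.filter (fun u => fx u = N - 1 - j)) := by
                intro u hu
                simp only [Finset.mem_filter, Finset.mem_insert] at hu ⊢
                rcases hu.1 with rfl | huS
                · exact Or.inl rfl
                · have huv : u ≠ v := fun h => hvS (h ▸ huS)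
                  rw [Function.update_of_ne huv] at hu
                  exact Or.inr ⟨huS, hu.2⟩
              calc _ ≤ (insert v (S.filter (fun u => fx u = N - 1 - j))).card :=
                    Finset.card_le_card hsub
                _ ≤ (S.filter (fun u => fx u = N - 1 - j)).card + 1 := Finset.card_insert_le _ _
                _ ≤ k := by omega
            · have heq : (insert v S).filter (fun u => Function.update fx v (N - 1 - j) u = col)
                  = S.filter (fun u => fx u = col) := by
                ext u
                simp only [Finset.mem_filter, Finset.mem_insert]
                constructor
                · rintro ⟨rfl | huS, hcu⟩
                  · rw [Function.update_self] at hcu; exact absurd hcu (Ne.symm hcol)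
                  · have huv : u ≠ v := fun h => hvS (h ▸ huS)
                    rw [Function.update_of_ne huv] at hcu
                    exact ⟨huS, hcu⟩
                · rintro ⟨huS, hcu⟩
                  have huv : u ≠ v := fun h => hvS (h ▸ huS)
                  rw [Function.update_of_ne huv]
                  exact ⟨Or.inr huS, hcu⟩
              rw [heq]; exact h3 col
          · have hsub : (insert v S).filter (fun u => Function.update fx v (N - 1 - j) u = N - 1 - j)
                ⊆ insert v (S.filter (fun u => fx u = N - 1 - j)) := by
              intro u hu
              simp only [Finset.mem_filter, Finset.mem_insert] at hu ⊢
              rcases hu.1 with rfl | huS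
              · exact Or.inl rfl
              · have huv : u ≠ v := fun h => hvS (h ▸ huS)
                rw [Function.update_of_ne huv] at hu
                exact Or.inr ⟨huS, hu.2⟩
            calc _ ≤ (insert v (S.filter (fun u => fx u = N - 1 - j))).card :=
                  Finset.card_le_card hsub
              _ ≤ (S.filter (fun u => fx u = N - 1 - j)).card + 1 := Finset.card_insert_le _ _
              _ ≤ t + 1 := by omega
          · apply Finset.union_subset h5
            intro e he
            obtain ⟨w, hw, rfl⟩ := Finset.mem_image.mp he
            simp only [hDdef, Finset.mem_filter, SimpleGraph.mem_neighborFinset] at hw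
            exact SimpleGraph.mem_edgeFinset.mpr hw.1
          · intro e he
            rcases Finset.mem_union.mp he with heE | heI
            · obtain ⟨x, hxS, hxe⟩ := h6 e heE
              exact ⟨x, Finset.mem_insert_of_mem hxS, hxe⟩
            · obtain ⟨w, hw, rfl⟩ := Finset.mem_image.mp heI
              exact ⟨v, Finset.mem_insert_self v S, Sym2.mem_mk_left v w⟩
          · have hdisj : Disjoint E (D.image (fun w => s(v, w))) := by
              rw [Finset.disjoint_left]
              intro e heE heI
              obtain ⟨x, hxS, hxe⟩ := h6 e heE
              obtain ⟨w, hw, rfl⟩ := Finset.mem_image.mp heI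
              simp only [hDdef, Finset.mem_filter, SimpleGraph.mem_neighborFinset] at hw
              rcases Sym2.mem_iff.mp hxe with rfl | rfl
              · exact hvS hxS
              · exact hw.2 hxS
            have himg : (D.image (fun w => s(v, w))).card = D.card := by
              apply Finset.card_image_of_injOn
              intro a _ b _ hab
              exact Sym2.congr_right.mp hab
            rw [Finset.card_union_of_disjoint hdisj, himg]
            have harith : k * k * (∑ t ∈ Finset.range j, (N - 1 - t)) + (t + 1) * (k * (N - 1 - j))
                = (k * k * (∑ t ∈ Finset.range j, (N - 1 - t)) + t * (k * (N - 1 - j)))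
                  + k * (N - 1 - j) := by ring
            rw [harith]
            exact Nat.add_le_add h7 hvdeg
      obtain ⟨S, fx, E, h1, h2, h3, _, h5, h6, h7⟩ := inner k le_rfl
      refine ⟨S, fx, E, ?_, ?_, h3, h5, h6, ?_⟩
      · rw [h1]; ring
      · intro u hu
        have := h2 u hu
        omega
      · rw [Finset.sum_range_succ]
        calc k * k * ((∑ t ∈ Finset.range j, (N - 1 - t)) + (N - 1 - j))
            = k * k * (∑ t ∈ Finset.range j, (N - 1 - t)) + k * (k * (N - 1 - j)) := by ring
          _ ≤ E.card := h7
  obtain ⟨S, fx, E, _, _, _, hsub, _, hcard⟩ := main (N - 1) le_rfl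
  have hsum : (∑ t ∈ Finset.range (N - 1), (N - 1 - t)) = N.choose 2 := by
    have := sum_desc (N - 1)
    have hN1 : N - 1 + 1 = N := by omega
    rw [hN1] at this
    exact this
  calc k * k * N.choose 2 = k * k * (∑ t ∈ Finset.range (N - 1), (N - 1 - t)) := by rw [hsum]
    _ ≤ E.card := hcard
    _ ≤ G.edgeFinset.card := Finset.card_le_card hsub

/-- Every `(n-1)`-colouring of the vertices of an arrowing graph has a vertex with at least
`k` monochromatic neighbours. -/
private lemma nogood {k n : ℕ} (hk : 2 ≤ k) (hn : 1 ≤ n)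
    (G : SimpleGraph V) [DecidableRel G.Adj]
    (hG : Arrows G (_root_.starGraph k) (⊤ : SimpleGraph (Fin n)))
    (c : V → Fin (n-1)) :
    ∃ v, k ≤ ((G.neighborFinset v).filter (fun u => c u = c v)).card := by
  let R : SimpleGraph V :=
    { Adj := fun a b => G.Adj a b ∧ c a = c b
      symm := by constructor; intro a b h; exact ⟨h.1.symm, h.2.symm⟩
      loopless := by constructor; intro a h; exact G.irrefl h.1 }
  have hRG : R ≤ G := fun a b h => h.1
  rcases hG R hRG with ⟨f, hf⟩ | ⟨f, hf⟩
  · refine ⟨f (Sum.inl 0), ?_⟩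
    have hmaps : ∀ i : Fin k, f (Sum.inr i) ∈
        (G.neighborFinset (f (Sum.inl 0))).filter (fun u => c u = c (f (Sum.inl 0))) := by
      intro i
      have hadj : R.Adj (f (Sum.inl 0)) (f (Sum.inr i)) := by
        apply f.map_adj
        simp [_root_.starGraph]
      simp only [Finset.mem_filter, SimpleGraph.mem_neighborFinset]
      exact ⟨hadj.1, hadj.2.symm⟩
    calc k = (Finset.univ : Finset (Fin k)).card := by simp
      _ ≤ _ := Finset.card_le_card_of_injOn (fun i => f (Sum.inr i)) (fun i _ => hmaps i)
          (fun i _ j _ hij => Sum.inr.inj (hf hij))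
  · exfalso
    have hinj : Function.Injective (fun i : Fin n => c (f i)) := by
      intro i j hij
      by_contra hne
      have hadj : (G \ R).Adj (f i) (f j) := by
        apply f.map_adj
        simp only [SimpleGraph.top_adj]
        exact hne
      rw [SimpleGraph.sdiff_adj] at hadj
      exact hadj.2 ⟨hadj.1, hij⟩
    have hcard := Fintype.card_le_of_injective _ hinj
    simp only [Fintype.card_fin] at hcard
    omega

end Aux

theorem stmt7 {V : Type*} [Fintype V] (k n : ℕ) (hk : 2 ≤ k) (hn : 1 ≤ n)
    (G : SimpleGraph V) (hG : Arrows G (_root_.starGraph k) (⊤ : SimpleGraph (Fin n))) :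
    k^2 * (n-1).choose 2 ≤ G.edgeSet.ncard := by
  classical
  by_cases h3 : n < 3
  · have h0 : (n-1).choose 2 = 0 := Nat.choose_eq_zero_of_lt (by omega)
    simp [h0]
  · push_neg at h3
    letI : DecidableEq V := Classical.decEq V
    letI : DecidableRel G.Adj := Classical.decRel _
    have Hc : ∀ c : V → Fin (n-1), ∃ v,
        k ≤ ((G.neighborFinset v).filter (fun u => c u = c v)).card :=
      nogood hk hn G hG
    have hb := build G k (n-1) (by omega) (by omega) Hc
    rw [← SimpleGraph.coe_edgeFinset, Set.ncard_coe_finset]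
    calc k^2 * (n-1).choose 2 = k * k * (n-1).choose 2 := by ring
      _ ≤ _ := hb
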